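/- Let X and Y be subshifts of Q^M and let Δ be a local map from X to Y. Then the image Δ(X) is a subshift of Q^M. -/

import Mathlib

open Filter Set

namespace GoE

variable {G M Q : Type*}

/-- A left homogeneous space `⟨M, G, ▷⟩` together with a coordinate system
`⟨m₀, (g_{m₀,m})_{m∈M}⟩`: a cell space with finite stabiliser `G₀` of `m₀`. -/
structure CellSpace (G M : Type*) [Group G] where
  act : G → M → M
  one_act : ∀ m : M, act 1 m = m
  mul_act : ∀ (g h : G) (m : M), act (g * h) m = act g (act h m)
  transitive : ∀ m m' : M, ∃ g : G, act g m = m'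
  m0 : M
  coord : M → G
  coord_act : ∀ m : M, act (coord m) m0 = m
  stab_finite : {g : G | act g m0 = m0}.Finite

variable [Group G]

namespace CellSpace

/-- Membership in the stabiliser `G₀` of `m₀`. -/
def stab (R : CellSpace G M) (g : G) : Prop := R.act g R.m0 = R.m0

/-- The induced right semi-action `m ↝ gG₀ = g_{m₀,m} g ▷ m₀`, on representatives. -/
def sAct (R : CellSpace G M) (m : M) (g : G) : M := R.act (R.coord m * g) R.m0

/-- `m ↝ ι n` where `ι : M → G/G₀`, `n ↦ G_{m₀,n}` is the canonical identification. -/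
def nAct (R : CellSpace G M) (m n : M) : M := R.act (R.coord m * R.coord n) R.m0

/-- `S ⊆ G` represents a finite symmetric right generating set of cosets
(`G₀ · S ⊆ S`, `S⁻¹ ⊆ S`, and `S` generates). -/
structure IsRightGenSet (R : CellSpace G M) (S : Set G) : Prop where
  finite : S.Finite
  saturated : ∀ s ∈ S, ∀ g₀ : G, R.stab g₀ → s * g₀ ∈ S
  stab_mul : ∀ g₀ : G, R.stab g₀ → ∀ s ∈ S, g₀ * s ∈ S
  symm : ∀ s ∈ S, s⁻¹ ∈ S
  generates : ∀ m : M, ∃ (k : ℕ) (f : ℕ → M), f 0 = R.m0 ∧ f k = m ∧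
    ∀ i < k, ∃ s ∈ S, f (i + 1) = R.sAct (f i) s

/-- There is an `S`-path of length `n` from `m` to `m'` in the `S`-Cayley graph. -/
def Chain (R : CellSpace G M) (S : Set G) (m m' : M) (n : ℕ) : Prop :=
  ∃ f : ℕ → M, f 0 = m ∧ f n = m' ∧ ∀ i < n, ∃ s ∈ S, f (i + 1) = R.sAct (f i) s

/-- The `S`-metric `d`. -/
noncomputable def dist (R : CellSpace G M) (S : Set G) (m m' : M) : ℕ :=
  sInf {n : ℕ | R.Chain S m m' n}

/-- The ball `B(m, ρ)` of radius `ρ` centred at `m`. -/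
noncomputable def ball (R : CellSpace G M) (S : Set G) (m : M) (ρ : ℕ) : Set M :=
  {m' : M | R.dist S m m' ≤ ρ}

/-- The `θ`-interior `A^{-θ}` of `A`. -/
noncomputable def inter (R : CellSpace G M) (S : Set G) (A : Set M) (θ : ℕ) : Set M :=
  {m ∈ A | R.ball S m θ ⊆ A}

/-- The `θ`-closure `A^{+θ}` of `A`. -/
noncomputable def clos (R : CellSpace G M) (S : Set G) (A : Set M) (θ : ℕ) : Set M :=
  {m : M | (R.ball S m θ ∩ A).Nonempty}

/-- The external `θ`-boundary `∂θ⁺A = A^{+θ} ∖ A`. -/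
noncomputable def extB (R : CellSpace G M) (S : Set G) (A : Set M) (θ : ℕ) : Set M :=
  R.clos S A θ \ A

/-- The internal `θ`-boundary `∂θ⁻A = A ∖ A^{-θ}`. -/
noncomputable def intB (R : CellSpace G M) (S : Set G) (A : Set M) (θ : ℕ) : Set M :=
  A \ R.inter S A θ

/-- The `θ`-boundary `∂θA = A^{+θ} ∖ A^{-θ}`. -/
noncomputable def bdry (R : CellSpace G M) (S : Set G) (A : Set M) (θ : ℕ) : Set M :=
  R.clos S A θ \ R.inter S A θ

end CellSpace

/-- The set `X_A` of restrictions to `A` of the elements of `X`. -/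
def restr (A : Set M) (X : Set (M → Q)) : Set (A → Q) :=
  (fun x : M → Q => A.restrict x) '' X

/-- The pattern `p` (with domain `A`) semi-occurs in the configuration `c`:
there is `h ∈ H` with `h ⊛ p = c↾_{h ▷ dom p}`. -/
def SemiOccurs (R : CellSpace G M) (H : Subgroup G) {A : Set M} (p : A → Q)
    (c : M → Q) : Prop :=
  ∃ h ∈ H, ∀ a : A, c (R.act h ↑a) = p a

/-- The pattern `p` (with domain `A`) occurs at `t` in the configuration `c`:
`t ⊛' p = c↾_{t ↝ A}`. -/
def OccursAt (R : CellSpace G M) {A : Set M} (p : A → Q) (t : M) (c : M → Q) : Prop :=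
  ∀ a : A, c (R.nAct t ↑a) = p a

/-- The pattern `p` is allowed in `X`: it semi-occurs in some point of `X`. -/
def Allowed (R : CellSpace G M) (H : Subgroup G) (X : Set (M → Q)) {A : Set M}
    (p : A → Q) : Prop :=
  ∃ x ∈ X, SemiOccurs R H p x

/-- The set `⟨𝔉⟩` generated by a set `𝔉` of forbidden patterns. -/
def Generated (R : CellSpace G M) (H : Subgroup G) (𝔉 : Set (Σ A : Set M, A → Q)) :
    Set (M → Q) :=
  {c : M → Q | ∀ f ∈ 𝔉, ¬ SemiOccurs R H f.2 c}

/-- `X` is a subshift of `Q^M`: it is generated by a set of blocks. -/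
def IsSubshift (R : CellSpace G M) (H : Subgroup G) (X : Set (M → Q)) : Prop :=
  ∃ 𝔉 : Set (Σ A : Set M, A → Q), (∀ f ∈ 𝔉, f.1.Finite) ∧ X = Generated R H 𝔉

/-- `X` is a subshift of finite type: it is generated by a finite set of blocks. -/
def IsSubshiftFT (R : CellSpace G M) (H : Subgroup G) (X : Set (M → Q)) : Prop :=
  ∃ 𝔉 : Set (Σ A : Set M, A → Q), 𝔉.Finite ∧ (∀ f ∈ 𝔉, f.1.Finite) ∧
    X = Generated R H 𝔉

/-- `X` is a `κ`-step subshift: it is generated by a set of `B(κ)`-blocks. -/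
def IsStep (R : CellSpace G M) (S : Set G) (H : Subgroup G) (X : Set (M → Q))
    (κ : ℕ) : Prop :=
  ∃ 𝔉 : Set (Σ A : Set M, A → Q), (∀ f ∈ 𝔉, f.1 = R.ball S R.m0 κ) ∧
    X = Generated R H 𝔉

/-- `X` is `κ`-strongly irreducible. -/
def IsStronglyIrr (R : CellSpace G M) (S : Set G) (H : Subgroup G)
    (X : Set (M → Q)) (κ : ℕ) : Prop :=
  ∀ (A B : Set M), A.Finite → B.Finite → ∀ (p : A → Q) (p' : B → Q),
    Allowed R H X p → Allowed R H X p' →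
    (∀ a ∈ A, ∀ b ∈ B, κ + 1 ≤ R.dist S a b) →
    ∃ x ∈ X, A.restrict x = p ∧ B.restrict x = p'

/-- `X` has `ρ`-bounded propagation. -/
def HasBoundedProp (R : CellSpace G M) (S : Set G) (X : Set (M → Q)) (ρ : ℕ) : Prop :=
  ∀ F : Set M, F.Finite → ∀ p : F → Q,
    (∀ f ∈ F, ∃ x ∈ X, ∀ (m : M) (hm : m ∈ R.ball S f ρ ∩ F), p ⟨m, hm.2⟩ = x m) →
    ∃ x ∈ X, F.restrict x = p

/-- `Δ` is a `κ`-local map from `X` to `Y`. -/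
def IsLocalMap (R : CellSpace G M) (S : Set G) (H : Subgroup G)
    (X Y : Set (M → Q)) (Δ : (M → Q) → (M → Q)) (κ : ℕ) : Prop :=
  Set.MapsTo Δ X Y ∧
  ∃ N : Set M, N ⊆ R.ball S R.m0 κ ∧
    (∀ g₀ : G, R.stab g₀ → ∀ n ∈ N, R.act g₀ n ∈ N) ∧
    ∃ δ : (N → Q) → Q,
      (∀ h₀ ∈ H, R.stab h₀ →
        ∀ ℓ ∈ restr N X, ∀ ℓ' : N → Q,
          (∀ (n : M) (hn : n ∈ N) (hn' : R.act h₀⁻¹ n ∈ N),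
            ℓ' ⟨n, hn⟩ = ℓ ⟨R.act h₀⁻¹ n, hn'⟩) →
          δ ℓ' = δ ℓ) ∧
      ∀ x ∈ X, ∀ m : M, Δ x m = δ (fun n : N => x (R.nAct m ↑n))

/-- `Δ` is pre-injective on `X`. -/
def PreInjective (X : Set (M → Q)) (Δ : (M → Q) → (M → Q)) : Prop :=
  ∀ x ∈ X, ∀ x' ∈ X, Δ x = Δ x' → {m : M | x m ≠ x' m}.Finite → x = x'

/-- The cell space `R` is right amenable: there is a finitely additive probability
measure on the power set of `M` that is semi-invariant under the right semi-action. -/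
def RightAmenable (R : CellSpace G M) : Prop :=
  ∃ μ : Set M → ℝ, (∀ A : Set M, 0 ≤ μ A) ∧ μ Set.univ = 1 ∧
    (∀ A B : Set M, Disjoint A B → μ (A ∪ B) = μ A + μ B) ∧
    ∀ (g : G) (A : Set M), Set.InjOn (fun m => R.sAct m g) A →
      μ ((fun m => R.sAct m g) '' A) = μ A

/-- `F` is a right Følner net in `R` (indexed by the directed set `I`). -/
def IsFolnerNet (R : CellSpace G M) (S : Set G) {I : Type*} [Preorder I]
    (F : I → Set M) : Prop :=
  (∀ i, (F i).Nonempty) ∧ (∀ i, (F i).Finite) ∧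
  ∀ ρ : ℕ, Tendsto (fun i => ((R.bdry S (F i) ρ).ncard : ℝ) / ((F i).ncard : ℝ))
    atTop (nhds 0)

/-- The entropy of `X ⊆ Q^M` with respect to the net `F`:
`limsup_i log|X_{F_i}| / |F_i|`. -/
noncomputable def entropy (R : CellSpace G M) (S : Set G) {I : Type*} [Preorder I]
    (F : I → Set M) (X : Set (M → Q)) : ℝ :=
  limsup (fun i => Real.log ((restr (F i) X).ncard : ℝ) / ((F i).ncard : ℝ)) atTop

/-- `T` is a `⟨θ, κ, θ'⟩`-tiling of `R`. -/
def IsTiling (R : CellSpace G M) (S : Set G) (θ κ θ' : ℕ) (T : Set M) : Prop :=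
  (∀ t ∈ T, ∀ t' ∈ T, t ≠ t' →
    ∀ a ∈ R.ball S t θ, ∀ b ∈ R.ball S t' θ, κ + 1 ≤ R.dist S a b) ∧
  ∀ m : M, ∃ t ∈ T, m ∈ R.ball S t θ'

/-- The action `h ⊛ c` of `h ∈ G` on configurations: `(h ⊛ c)(m) = c(h⁻¹ ▷ m)`. -/
def shiftAct (R : CellSpace G M) (h : G) (c : M → Q) : M → Q :=
  fun m => c (R.act h⁻¹ m)

lemma stab_inv (R : CellSpace G M) {g : G} (hg : R.stab g) : R.stab g⁻¹ := by
  unfold CellSpace.stab at *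
  conv_lhs => rw [← hg]
  rw [← R.mul_act, inv_mul_cancel, R.one_act]

lemma act_coord_inv (R : CellSpace G M) (m : M) : R.act (R.coord m)⁻¹ m = R.m0 := by
  nth_rewrite 2 [← R.coord_act m]
  rw [← R.mul_act, inv_mul_cancel, R.one_act]

lemma shift_mem_generated (R : CellSpace G M) (H : Subgroup G)
    (𝔉 : Set (Σ A : Set M, A → Q)) {c : M → Q} (hc : c ∈ Generated R H 𝔉)
    {h : G} (hh : h ∈ H) : (fun m => c (R.act h m)) ∈ Generated R H 𝔉 := by
  rintro f hf ⟨h', hh', hocc⟩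
  refine hc f hf ⟨h * h', H.mul_mem hh hh', fun a => ?_⟩
  rw [R.mul_act]; exact hocc a

lemma chain_finite (R : CellSpace G M) {S : Set G} (hSfin : S.Finite) (m : M) :
    ∀ n : ℕ, {m' : M | R.Chain S m m' n}.Finite := by
  intro n
  induction n with
  | zero =>
    refine Set.Finite.subset (Set.finite_singleton m) ?_
    rintro m' ⟨f, h0, hn, _⟩
    simp [← h0, ← hn]
  | succ n ih =>
    refine Set.Finite.subset (hSfin.biUnion (fun s _ => ih.image (fun x => R.sAct x s))) ?_
    rintro m' ⟨f, h0, hn, hstep⟩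
    obtain ⟨s, hs, heq⟩ := hstep n (Nat.lt_succ_self n)
    exact Set.mem_biUnion hs ⟨f n, ⟨f, h0, rfl, fun i hi => hstep i (hi.trans (Nat.lt_succ_self n))⟩,
      heq.symm.trans hn⟩

lemma ball_m0_finite (R : CellSpace G M) {S : Set G} (hS : R.IsRightGenSet S) (κ : ℕ) :
    (R.ball S R.m0 κ).Finite := by
  refine Set.Finite.subset
    (Set.Finite.biUnion (Set.finite_Iic κ) (fun n _ => chain_finite R hS.finite R.m0 n)) ?_
  intro m' hm'
  have hne : {n : ℕ | R.Chain S R.m0 m' n}.Nonempty := by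
    obtain ⟨k, f, h0, hk, hstep⟩ := hS.generates m'
    exact ⟨k, f, h0, hk, hstep⟩
  exact Set.mem_biUnion (show R.dist S R.m0 m' ∈ Set.Iic κ from hm') (Nat.sInf_mem hne)

lemma equivariance (R : CellSpace G M) (H : Subgroup G) (hH : ∀ m : M, R.coord m ∈ H)
    (𝔉X : Set (Σ A : Set M, A → Q)) (X : Set (M → Q)) (hXeq : X = Generated R H 𝔉X)
    (N : Set M) (hNstab : ∀ g₀ : G, R.stab g₀ → ∀ n ∈ N, R.act g₀ n ∈ N)
    (δ : (N → Q) → Q)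
    (hδinv : ∀ h₀ ∈ H, R.stab h₀ →
        ∀ ℓ ∈ restr N X, ∀ ℓ' : N → Q,
          (∀ (n : M) (hn : n ∈ N) (hn' : R.act h₀⁻¹ n ∈ N),
            ℓ' ⟨n, hn⟩ = ℓ ⟨R.act h₀⁻¹ n, hn'⟩) → δ ℓ' = δ ℓ)
    {x : M → Q} (hx : x ∈ X) {h : G} (hh : h ∈ H) (m : M) :
    δ (fun n : N => x (R.act h (R.nAct m ↑n))) = δ (fun n : N => x (R.nAct (R.act h m) ↑n)) := by
  set m' := R.act h m with hm'
  set g₀ : G := (R.coord m')⁻¹ * (h * R.coord m) with hg₀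
  have hstabg : R.stab g₀ := by
    show R.act g₀ R.m0 = R.m0
    rw [hg₀, R.mul_act, R.mul_act, R.coord_act, ← hm', act_coord_inv]
  have hg₀H : g₀ ∈ H := H.mul_mem (H.inv_mem (hH m')) (H.mul_mem hh (hH m))
  have key1 : ∀ n : M, R.act h (R.nAct m n) = R.act (R.coord m') (R.act g₀ n) := by
    intro n
    have hgn : R.act g₀ n = R.act (g₀ * R.coord n) R.m0 := by
      conv_lhs => rw [← R.coord_act n]
      rw [← R.mul_act]
    rw [hgn, CellSpace.nAct, ← R.mul_act, ← R.mul_act, hg₀]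
    congr 1
    group
  have key2 : ∀ n : M, R.nAct m' n = R.act (R.coord m') n := by
    intro n
    rw [CellSpace.nAct, R.mul_act, R.coord_act]
  have hyX : (fun a => x (R.act (R.coord m') a)) ∈ X := by
    rw [hXeq] at hx ⊢
    exact shift_mem_generated R H 𝔉X hx (hH m')
  have hmem : N.restrict (fun a => x (R.act (R.coord m') a)) ∈ restr N X :=
    ⟨_, hyX, rfl⟩
  have := hδinv g₀⁻¹ (H.inv_mem hg₀H) (stab_inv R hstabg) _ hmem
    (fun n : N => x (R.act h (R.nAct m ↑n)))
    (by
      intro n hn hn'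
      simp only [inv_inv] at hn' ⊢
      show x (R.act h (R.nAct m n)) = x (R.act (R.coord m') (R.act g₀ n))
      rw [key1 n])
  rw [this]
  congr 1
  funext n
  show x (R.act (R.coord m') ↑n) = x (R.nAct m' ↑n)
  rw [key2]

theorem stmt7
    [Finite Q] (R : CellSpace G M) (S : Set G) (hS : R.IsRightGenSet S)
    (H : Subgroup G) (hH : ∀ m : M, R.coord m ∈ H)
    (X Y : Set (M → Q)) (hX : IsSubshift R H X) (hY : IsSubshift R H Y)
    (Δ : (M → Q) → (M → Q)) (hΔ : ∃ κ : ℕ, IsLocalMap R S H X Y Δ κ) :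
    IsSubshift R H (Δ '' X) := by
  classical
  obtain ⟨𝔉X, h𝔉Xfin, hXeq⟩ := hX
  obtain ⟨κ, hmaps, N, hNball, hNstab, δ, hδinv, hδ⟩ := hΔ
  have hNfin : N.Finite := (ball_m0_finite R hS κ).subset hNball
  have hXinv : ∀ x ∈ X, ∀ h ∈ H, (fun m => x (R.act h m)) ∈ X := by
    intro x hx h hh
    rw [hXeq] at hx ⊢
    exact shift_mem_generated R H 𝔉X hx hh
  have hequiv : ∀ x ∈ X, ∀ h ∈ H, ∀ m : M,
      Δ (fun m' => x (R.act h m')) m = Δ x (R.act h m) := by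
    intro x hx h hh m
    rw [hδ _ (hXinv x hx h hh) m, hδ x hx (R.act h m)]
    exact equivariance R H hH 𝔉X X hXeq N hNstab δ hδinv hx hh m
  refine ⟨{f : Σ A : Set M, A → Q | f.1.Finite ∧ ¬ Allowed R H (Δ '' X) f.2},
    fun f hf => hf.1, ?_⟩
  ext c
  constructor
  · rintro ⟨x, hx, rfl⟩ f hf hocc
    exact hf.2 ⟨Δ x, ⟨x, hx, rfl⟩, hocc⟩
  · intro hc
    have key : ∀ A : Finset M, ∃ x ∈ X, ∀ a ∈ A, Δ x a = c a := by
      intro A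
      have hallowed : Allowed R H (Δ '' X) ((A : Set M).restrict c) := by
        by_contra hna
        exact hc ⟨(A : Set M), (A : Set M).restrict c⟩ ⟨A.finite_toSet, hna⟩
          ⟨1, H.one_mem, fun a => by rw [R.one_act]; rfl⟩
      obtain ⟨z, ⟨x, hx, rfl⟩, h', hh', hocc⟩ := hallowed
      refine ⟨fun m' => x (R.act h' m'), hXinv x hx h' hh', fun a ha => ?_⟩
      rw [hequiv x hx h' hh' a]
      exact hocc ⟨a, ha⟩
    choose xf hxfX hxf using key
    set U : Ultrafilter (Finset M) := Ultrafilter.of atTop with hU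
    have hUle : (↑U : Filter (Finset M)) ≤ atTop := Ultrafilter.of_le atTop
    have hval : ∀ m : M, ∃ qq : Q, {A : Finset M | xf A m = qq} ∈ U := by
      intro m
      obtain ⟨qq, -, hq⟩ := U.map (fun A => xf A m)
        |>.eq_pure_of_finite_mem Set.finite_univ Filter.univ_mem
      refine ⟨qq, ?_⟩
      have : {qq} ∈ U.map (fun A => xf A m) := by
        rw [hq]; exact Set.mem_singleton qq
      rw [Ultrafilter.mem_map] at this
      exact this
    choose q hq using hval
    have hqX : q ∈ X := by
      rw [hXeq]
      rintro f hf ⟨h', hh', hocc⟩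
      have hT : (⋂ a ∈ f.1, {A : Finset M | xf A (R.act h' a) = q (R.act h' a)}) ∈ U :=
        (Filter.biInter_mem (h𝔉Xfin f hf)).mpr (fun a _ => hq _)
      obtain ⟨A, hA⟩ := U.nonempty_of_mem hT
      simp only [Set.mem_iInter] at hA
      have hxA := hxfX A
      rw [hXeq] at hxA
      refine hxA f hf ⟨h', hh', fun a => ?_⟩
      rw [hA a a.2]
      exact hocc a
    refine ⟨q, hqX, ?_⟩
    funext m
    have h1 : {A : Finset M | m ∈ A} ∈ U :=
      hUle (Filter.mem_atTop_sets.mpr ⟨{m}, fun b hb => Finset.singleton_subset_iff.mp hb⟩)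
    have h2 : (⋂ n ∈ N, {A : Finset M | xf A (R.nAct m n) = q (R.nAct m n)}) ∈ U :=
      (Filter.biInter_mem hNfin).mpr (fun n _ => hq _)
    obtain ⟨A, hA⟩ := U.nonempty_of_mem (Filter.inter_mem h1 h2)
    obtain ⟨hmA, hA2⟩ := hA
    simp only [Set.mem_iInter] at hA2
    rw [hδ q hqX m]
    have heq : (fun n : N => q (R.nAct m ↑n)) = (fun n : N => xf A (R.nAct m ↑n)) := by
      funext n
      exact (hA2 n n.2).symm
    rw [heq, ← hδ (xf A) (hxfX A) m]
    exact hxf A m hmA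

end GoE
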